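/- Let q be a power of an odd prime. For any multiplicative characters A, C of 𝔽_q^× and any λ ∈ 𝔽_q with λ ≠ 1, Σ_{y∈𝔽_q} A(y)·(CĀ)(1−y)·C̄(1−λy) = Ā(λ−1)·J(A, C̄) − A(−1)·C̄(λ); equivalently, ℙ_D^{(1)}[A; C; C; λ] = Ā(λ−1)·J(A, C̄) − A(−1)·C̄(λ). -/

import Mathlib

open Finset

/-- Jacobi sum `J(A,B) = Σ_x A(x) B(1-x)`. -/
noncomputable def jacobiSum' {F : Type} [Field F] [Fintype F] (A B : MulChar F ℂ) : ℂ :=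
  ∑ x : F, A x * B (1 - x)

/-- One-variable finite-field period function `ℙ_D^{(1)}[A; B; C; λ]`. -/
noncomputable def P1 {F : Type} [Field F] [Fintype F] (A B C : MulChar F ℂ) (l : F) : ℂ :=
  ∑ y : F, A y * (C * A⁻¹) (1 - y) * B⁻¹ (1 - l * y)

/-- Two-variable finite-field Appell–Lauricella period function `ℙ_D^{(2)}`. -/
noncomputable def P2 {F : Type} [Field F] [Fintype F] (A B₁ B₂ C : MulChar F ℂ) (l₁ l₂ : F) : ℂ :=
  ∑ y : F, A y * (C * A⁻¹) (1 - y) * B₁⁻¹ (1 - l₁ * y) * B₂⁻¹ (1 - l₂ * y)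

/-- n-variable finite-field Appell–Lauricella period function `ℙ_D^{(n)}`. -/
noncomputable def PDn {F : Type} [Field F] [Fintype F] (n : ℕ) (A : MulChar F ℂ)
    (B : Fin n → MulChar F ℂ) (C : MulChar F ℂ) (l : Fin n → F) : ℂ :=
  ∑ y : F, A y * (C * A⁻¹) (1 - y) * ∏ i, (B i)⁻¹ (1 - l i * y)

/-- Normalized two-variable Appell–Lauricella function `𝔽_D^{(2)}`. -/
noncomputable def F2 {F : Type} [Field F] [Fintype F] (A B₁ B₂ C : MulChar F ℂ) (l₁ l₂ : F) : ℂ :=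
  P2 A B₁ B₂ C l₁ l₂ / jacobiSum' A (C * A⁻¹)

/-- Normalized n-variable Appell–Lauricella function `𝔽_D^{(n)}`. -/
noncomputable def FDn {F : Type} [Field F] [Fintype F] (n : ℕ) (A : MulChar F ℂ)
    (B : Fin n → MulChar F ℂ) (C : MulChar F ℂ) (l : Fin n → F) : ℂ :=
  PDn n A B C l / jacobiSum' A (C * A⁻¹)

/-- Finite-field Gauss hypergeometric function `₂𝔽₁[A,B;C;λ] = ℙ_D^{(1)}[B;A;C;λ]/J(B,C B̄)`. -/
noncomputable def twoF1 {F : Type} [Field F] [Fintype F] (A B C : MulChar F ℂ) (l : F) : ℂ :=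
  P1 B A C l / jacobiSum' B (C * B⁻¹)

open scoped Classical in
/-- `δ(x) = 1` if `x = 0`, else `0`. -/
noncomputable def deltaC {F : Type} [Field F] [Fintype F] (x : F) : ℂ :=
  if x = 0 then 1 else 0

noncomputable instance {F : Type} [Field F] [Fintype F] : Fintype (MulChar F ℂ) :=
  Fintype.ofFinite _

/-- Character binomial coefficient `(A choose χ) = -χ(-1) J(A, χ̄)`. -/
noncomputable def charBinom {F : Type} [Field F] [Fintype F] (A χ : MulChar F ℂ) : ℂ :=
  -χ (-1) * jacobiSum' A χ⁻¹

section Aux19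
variable {F : Type} [Field F] [Fintype F]

omit [Fintype F] in
lemma mc_mul_inv_self (A : MulChar F ℂ) {x : F} (hx : x ≠ 0) : A x * A x⁻¹ = 1 := by
  rw [← map_mul, mul_inv_cancel₀ hx, map_one]

omit [Fintype F] in
lemma mc_ne_zero (A : MulChar F ℂ) {x : F} (hx : x ≠ 0) : A x ≠ 0 := by
  intro h
  have := mc_mul_inv_self A hx
  rw [h, zero_mul] at this
  exact zero_ne_one this

omit [Fintype F] in
lemma mc_map_inv (A : MulChar F ℂ) (x : F) : A x⁻¹ = (A x)⁻¹ := by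
  rw [← MulChar.inv_apply', MulChar.inv_apply_eq_inv']

omit [Fintype F] in
lemma mc_map_div (A : MulChar F ℂ) (x y : F) : A (x / y) = A x / A y := by
  rw [div_eq_mul_inv, map_mul, mc_map_inv, div_eq_mul_inv]

lemma key_sum (A C : MulChar F ℂ) (l : F) (hl : l ≠ 1) :
    (∑ y : F, A y * (C * A⁻¹) (1 - y) * C⁻¹ (1 - l * y)) =
      A⁻¹ (l - 1) * jacobiSum' A C⁻¹ - A (-1) * C⁻¹ l := by
  classical
  have h1l : (1 : F) - l ≠ 0 := sub_ne_zero.mpr (Ne.symm hl)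
  have hl1 : l - 1 ≠ 0 := sub_ne_zero.mpr hl
  have hsq : A (-1) * A (-1) = 1 := by rw [← map_mul]; norm_num
  have hAinv : (A (-1))⁻¹ = A (-1) := (eq_inv_of_mul_eq_one_left hsq).symm
  set f : F → ℂ := fun y => A y * (C * A⁻¹) (1 - y) * C⁻¹ (1 - l * y) with hf
  set g : F → ℂ := fun u => A⁻¹ (1 - l) * (A u * C⁻¹ (1 + u)) with hg
  -- Step A: restrict to y ≠ 1
  have stepA : (∑ y : F, f y) = ∑ y ∈ univ.erase 1, f y := by
    refine (Finset.sum_subset (Finset.subset_univ _) ?_).symm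
    intro x _ hx
    have hx1 : x = 1 := by
      by_contra h
      exact hx (Finset.mem_erase.mpr ⟨h, Finset.mem_univ x⟩)
    simp [hf, hx1, MulChar.map_zero]
  -- Step B: reindex y ↦ (1-l)y/(1-y)
  have stepB : (∑ y ∈ univ.erase 1, f y) = ∑ u ∈ univ.erase (l - 1), g u := by
    refine Finset.sum_nbij' (fun y => (1 - l) * y / (1 - y)) (fun u => u / (u + (1 - l)))
      ?_ ?_ ?_ ?_ ?_
    · intro y hy
      have hy1 : y ≠ 1 := (Finset.mem_erase.mp hy).1
      have hy1' : (1 : F) - y ≠ 0 := sub_ne_zero.mpr (Ne.symm hy1)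
      refine Finset.mem_erase.mpr ⟨?_, Finset.mem_univ _⟩
      intro h
      rw [div_eq_iff hy1'] at h
      exact h1l (by linear_combination h)
    · intro u hu
      have hu1 : u ≠ l - 1 := (Finset.mem_erase.mp hu).1
      have hdenom : u + (1 - l) ≠ 0 := by
        intro h; apply hu1; linear_combination h
      refine Finset.mem_erase.mpr ⟨?_, Finset.mem_univ _⟩
      intro h
      rw [div_eq_one_iff_eq hdenom] at h
      exact h1l (by linear_combination -h)
    · intro y hy
      have hy1 : y ≠ 1 := (Finset.mem_erase.mp hy).1
      have hy1' : (1 : F) - y ≠ 0 := sub_ne_zero.mpr (Ne.symm hy1)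
      have hkey : (1 - l) * y / (1 - y) + (1 - l) = (1 - l) / (1 - y) := by
        field_simp [hy1']
        ring
      show (1 - l) * y / (1 - y) / ((1 - l) * y / (1 - y) + (1 - l)) = y
      rw [hkey]
      field_simp [h1l, hy1']
    · intro u hu
      have hu1 : u ≠ l - 1 := (Finset.mem_erase.mp hu).1
      have hdenom : u + (1 - l) ≠ 0 := by
        intro h; apply hu1; linear_combination h
      have hkey : (1 : F) - u / (u + (1 - l)) = (1 - l) / (u + (1 - l)) := by
        field_simp [hdenom]
        ring
      show (1 - l) * (u / (u + (1 - l))) / (1 - u / (u + (1 - l))) = u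
      rw [hkey]
      field_simp [h1l, hdenom]
    · intro y hy
      have hy1 : y ≠ 1 := (Finset.mem_erase.mp hy).1
      have hy1' : (1 : F) - y ≠ 0 := sub_ne_zero.mpr (Ne.symm hy1)
      by_cases hy0 : y = 0
      · simp [hf, hg, hy0, MulChar.map_zero]
      by_cases hly : 1 - l * y = 0
      · have harg : 1 + (1 - l) * y / (1 - y) = 0 := by
          field_simp [hy1']
          linear_combination hly
        simp [hf, hg, hly, harg, MulChar.map_zero]
      -- main case: all arguments nonzero
      have harg : 1 + (1 - l) * y / (1 - y) = (1 - l * y) / (1 - y) := by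
        field_simp [hy1']
        ring
      simp only [hf, hg, harg, MulChar.coeToFun_mul, Pi.mul_apply,
        MulChar.inv_apply_eq_inv', mc_map_div, map_mul]
      have h1 := mc_ne_zero A h1l
      have h2 := mc_ne_zero A hy1'
      have h3 := mc_ne_zero C hy1'
      have h4 := mc_ne_zero C hly
      have h5 := mc_ne_zero A hy0
      field_simp
  -- Step C: remove the point u = l - 1
  have stepC : (∑ u ∈ univ.erase (l - 1), g u) = (∑ u : F, g u) - g (l - 1) :=
    Finset.sum_erase_eq_sub (Finset.mem_univ _)
  -- Step D: evaluate full sum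
  have stepD : (∑ u : F, g u) = A⁻¹ (1 - l) * (A (-1) * jacobiSum' A C⁻¹) := by
    rw [← Finset.mul_sum]
    congr 1
    rw [jacobiSum', Finset.mul_sum]
    refine Fintype.sum_equiv (Equiv.neg F) _ _ fun u => ?_
    simp only [Equiv.neg_apply]
    rw [show (1 : F) - -u = 1 + u by ring, show -u = -1 * u by ring, map_mul]
    linear_combination -(A u * C⁻¹ (1 + u)) * hsq
  have hA1 : A⁻¹ (1 - l) * A (-1) = A⁻¹ (l - 1) := by
    simp only [MulChar.inv_apply_eq_inv']
    rw [show (1 : F) - l = -1 * (l - 1) by ring, map_mul, mul_inv, hAinv]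
    linear_combination (A (l - 1))⁻¹ * hsq
  have hA2 : A⁻¹ (1 - l) * A (l - 1) = A (-1) := by
    simp only [MulChar.inv_apply_eq_inv']
    rw [show (1 : F) - l = -1 * (l - 1) by ring, map_mul, mul_inv, hAinv]
    linear_combination A (-1) * inv_mul_cancel₀ (mc_ne_zero A hl1)
  have hg1 : g (l - 1) = A (-1) * C⁻¹ l := by
    simp only [hg]
    rw [show (1 : F) + (l - 1) = l by ring, ← mul_assoc, hA2]
  calc (∑ y : F, f y) = ∑ u : F, g u - g (l - 1) := by rw [stepA, stepB, stepC]
    _ = A⁻¹ (l - 1) * jacobiSum' A C⁻¹ - A (-1) * C⁻¹ l := by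
        rw [stepD, hg1, ← mul_assoc, hA1]
end Aux19

/-- evaluation of `ℙ_D^{(1)}[A; C; C; λ]` for `λ ≠ 1`. -/
theorem statement_19 (F : Type) [Field F] [Fintype F] (hq : Odd (Fintype.card F))
    (A C : MulChar F ℂ) (l : F) (hl : l ≠ 1) :
    (∑ y : F, A y * (C * A⁻¹) (1 - y) * C⁻¹ (1 - l * y)) =
      A⁻¹ (l - 1) * jacobiSum' A C⁻¹ - A (-1) * C⁻¹ l ∧
    P1 A C C l = A⁻¹ (l - 1) * jacobiSum' A C⁻¹ - A (-1) * C⁻¹ l := by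
  have h := key_sum A C l hl
  exact ⟨h, h⟩
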